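/- Let A be a real p×n matrix of full column rank n (so AᵀA is invertible), let A⁺ = (AᵀA)⁻¹Aᵀ be its pseudo-inverse, let W be an m×n real matrix, and let g be a random vector in ℝᵖ whose coordinates are independent, each distributed as a centered Gaussian with standard deviation σ ≥ 0. Then the expected squared Euclidean norm satisfies E[‖W A⁺ g‖₂²] = σ² · trace(WᵀW (AᵀA)⁻¹). In particular, taking σ = ‖A‖₂·√(2 ln(2/δ))/ε with ε > 0 and 0 < δ < 1, this expectation equals (2 ln(2/δ)/ε²) · ‖A‖₂² · trace(WᵀW (AᵀA)⁻¹). -/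

import Mathlib

open Matrix MeasureTheory ProbabilityTheory BigOperators

open Real Set NNReal ENNReal

lemma aux_integrable_sq_mul_exp {b : ℝ} (hb : 0 < b) :
    Integrable (fun x : ℝ => x ^ 2 * Real.exp (-b * x ^ 2)) := by
  have := integrable_rpow_mul_exp_neg_mul_sq hb (s := 2) (by norm_num)
  have h : ∀ x : ℝ, x ^ (2:ℝ) = x ^ (2:ℕ) := fun x => by
    rw [show ((2:ℝ)) = ((2:ℕ):ℝ) by norm_num, Real.rpow_natCast]
  simpa [h] using this

lemma aux_integral_Ioi_sq_mul_exp {b : ℝ} (hb : 0 < b) :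
    ∫ x in Ioi (0:ℝ), x ^ 2 * Real.exp (-b * x ^ 2)
      = b ^ (-(3:ℝ)/2) * (1 / 2) * Real.Gamma (3 / 2) := by
  have := integral_rpow_mul_exp_neg_mul_rpow (p := 2) (q := 2) (b := b)
    (by norm_num) (by norm_num) hb
  have h : ∀ x : ℝ, x ^ (2:ℝ) = x ^ (2:ℕ) := fun x => by
    rw [show ((2:ℝ)) = ((2:ℕ):ℝ) by norm_num, Real.rpow_natCast]
  simp only [h] at this
  rw [show (-(3:ℝ)/2) = (-(2+1)/2 : ℝ) by norm_num, show ((3:ℝ)/2) = ((2+1)/2 : ℝ) by norm_num]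
  rw [← this]

lemma aux_integral_sq_mul_exp {b : ℝ} (hb : 0 < b) :
    ∫ x : ℝ, x ^ 2 * Real.exp (-b * x ^ 2)
      = 2 * (b ^ (-(3:ℝ)/2) * (1 / 2) * Real.Gamma (3 / 2)) := by
  have hint := aux_integrable_sq_mul_exp hb
  have hs : ∫ x in Iic (0:ℝ), x ^ 2 * Real.exp (-b * x ^ 2)
      = ∫ x in Ioi (0:ℝ), x ^ 2 * Real.exp (-b * x ^ 2) := by
    rw [← neg_zero, ← integral_comp_neg_Ioi]
    norm_num
  rw [← intervalIntegral.integral_Iic_add_Ioi (hint.integrableOn) (hint.integrableOn), hs,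
    aux_integral_Ioi_sq_mul_exp hb]
  ring

lemma aux_pdf_form (v : ℝ≥0) (x : ℝ) :
    gaussianPDFReal 0 v x
      = (Real.sqrt (2 * π * v))⁻¹ * Real.exp (-(2 * (v:ℝ))⁻¹ * x ^ 2) := by
  rw [gaussianPDFReal]
  congr 2
  rw [sub_zero]
  by_cases hv : (v:ℝ) = 0
  · simp [hv]
  · field_simp

lemma aux_integral_gaussianReal {v : ℝ≥0} (hv : v ≠ 0) (f : ℝ → ℝ) :
    ∫ x, f x ∂(gaussianReal 0 v) = ∫ x, gaussianPDFReal 0 v x * f x := by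
  rw [gaussianReal_of_var_ne_zero _ hv]
  have hd : (fun x => gaussianPDF 0 v x)
      = fun x => ((Real.toNNReal (gaussianPDFReal 0 v x) : ℝ≥0) : ℝ≥0∞) := rfl
  rw [show (ProbabilityTheory.gaussianPDF 0 v) = fun x => ((Real.toNNReal (gaussianPDFReal 0 v x) : ℝ≥0) : ℝ≥0∞) from rfl]
  rw [integral_withDensity_eq_integral_smul
    ((measurable_gaussianPDFReal 0 v).real_toNNReal) f]
  refine integral_congr_ae (Filter.Eventually.of_forall fun x => ?_)
  simp only [NNReal.smul_def, Real.coe_toNNReal _ (gaussianPDFReal_nonneg 0 v x), smul_eq_mul]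

lemma aux_integrable_gaussianReal {v : ℝ≥0} (hv : v ≠ 0) (f : ℝ → ℝ) :
    Integrable f (gaussianReal 0 v)
      ↔ Integrable (fun x => gaussianPDFReal 0 v x * f x) volume := by
  rw [gaussianReal_of_var_ne_zero _ hv]
  rw [show (ProbabilityTheory.gaussianPDF 0 v) = fun x => ((Real.toNNReal (gaussianPDFReal 0 v x) : ℝ≥0) : ℝ≥0∞) from rfl]
  rw [integrable_withDensity_iff_integrable_smul
    ((measurable_gaussianPDFReal 0 v).real_toNNReal)]
  constructor <;> intro h <;> refine h.congr (Filter.Eventually.of_forall fun x => ?_) <;>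
    simp only [NNReal.smul_def, Real.coe_toNNReal _ (gaussianPDFReal_nonneg 0 v x), smul_eq_mul]

lemma aux_integrable_id_gaussianReal (v : NNReal) :
    Integrable (fun x : ℝ => x) (gaussianReal 0 v) := by
  by_cases hv : v = 0
  · rw [hv, gaussianReal_zero_var]
    exact ⟨aestronglyMeasurable_id, by simp [HasFiniteIntegral, lintegral_dirac]⟩
  · rw [aux_integrable_gaussianReal hv]
    have hvpos : 0 < (v:ℝ) := by positivity
    have hb : 0 < (2 * (v:ℝ))⁻¹ := by positivity
    have := (integrable_mul_exp_neg_mul_sq hb).const_mul (Real.sqrt (2 * π * v))⁻¹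
    refine this.congr (Filter.Eventually.of_forall fun x => ?_)
    simp only [aux_pdf_form]
    ring

lemma aux_integrable_sq_gaussianReal (v : NNReal) :
    Integrable (fun x : ℝ => x * x) (gaussianReal 0 v) := by
  by_cases hv : v = 0
  · rw [hv, gaussianReal_zero_var]
    exact ⟨(measurable_id.mul measurable_id).aestronglyMeasurable,
      by simp [HasFiniteIntegral, lintegral_dirac]⟩
  · rw [aux_integrable_gaussianReal hv]
    have hb : 0 < (2 * (v:ℝ))⁻¹ := by positivity
    have := (aux_integrable_sq_mul_exp hb).const_mul (Real.sqrt (2 * π * v))⁻¹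
    refine this.congr (Filter.Eventually.of_forall fun x => ?_)
    simp only [aux_pdf_form]
    ring

lemma aux_mean_gaussianReal (v : NNReal) :
    ∫ x, x ∂(gaussianReal 0 v) = 0 := by
  have hmap := gaussianReal_map_const_mul (μ := 0) (v := v) (-1)
  have hv1 : (NNReal.mk ((-1:ℝ)^2) (sq_nonneg _)) = 1 := by
    ext; norm_num
  rw [hv1, one_mul, neg_one_mul, neg_zero] at hmap
  have h := integral_map (μ := gaussianReal 0 v)
    (φ := fun x : ℝ => -1 * x) (measurable_id.const_mul (-1)).aemeasurable
    (f := fun x : ℝ => x) aestronglyMeasurable_id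
  rw [hmap] at h
  have : ∫ x, x ∂(gaussianReal 0 v) = - ∫ x, x ∂(gaussianReal 0 v) := by
    nth_rewrite 1 [h]
    simp only [neg_one_mul]
    exact integral_neg _
  linarith

lemma aux_variance_gaussianReal (v : NNReal) :
    ∫ x, x * x ∂(gaussianReal 0 v) = v := by
  by_cases hv : v = 0
  · rw [hv, gaussianReal_zero_var, integral_dirac]
    simp
  · rw [aux_integral_gaussianReal hv]
    have h2v : (0:ℝ) < 2 * v := by positivity
    have hb : 0 < (2 * (v:ℝ))⁻¹ := by positivity
    have step1 : ∫ x, gaussianPDFReal 0 v x * (x * x)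
        = (Real.sqrt (2 * π * v))⁻¹ * ∫ x, x ^ 2 * Real.exp (-(2 * (v:ℝ))⁻¹ * x ^ 2) := by
      rw [← integral_const_mul]
      refine integral_congr_ae (Filter.Eventually.of_forall fun x => ?_)
      simp only [aux_pdf_form]
      ring
    rw [step1, aux_integral_sq_mul_exp hb]
    have hG : Real.Gamma (3 / 2) = Real.sqrt π / 2 := by
      rw [show (3/2:ℝ) = 1/2 + 1 by norm_num, Real.Gamma_add_one (by norm_num),
        Real.Gamma_one_half_eq]
      ring
    have hpow : ((2 * (v:ℝ))⁻¹) ^ (-(3:ℝ)/2) = (2 * v) * Real.sqrt (2 * v) := by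
      rw [Real.inv_rpow h2v.le, ← Real.rpow_neg h2v.le, show (-(-(3:ℝ)/2)) = 1 + 1/2 by norm_num,
        Real.rpow_add h2v, Real.rpow_one, ← Real.sqrt_eq_rpow]
    have hsqrt : Real.sqrt (2 * π * (v:ℝ)) = Real.sqrt π * Real.sqrt (2 * v) := by
      rw [show 2 * π * (v:ℝ) = π * (2 * v) by ring, Real.sqrt_mul Real.pi_pos.le]
    rw [hG, hpow, hsqrt]
    have ht : (0:ℝ) < Real.sqrt π := Real.sqrt_pos.mpr Real.pi_pos
    have hs : (0:ℝ) < Real.sqrt (2 * v) := Real.sqrt_pos.mpr h2v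
    field_simp

lemma aux_isUnit_det {p n : ℕ} (A : Matrix (Fin p) (Fin n) ℝ) (hA : A.rank = n) :
    IsUnit (Aᵀ * A).det := by
  have hrank : (Aᵀ * A).rank = n := by rw [Matrix.rank_transpose_mul_self, hA]
  have hsurj : LinearMap.range (Aᵀ * A).mulVecLin = ⊤ := by
    apply Submodule.eq_top_of_finrank_eq
    rw [← Matrix.rank, hrank, Module.finrank_fintype_fun_eq_card, Fintype.card_fin]
  have hinj : Function.Injective ((Aᵀ * A).mulVecLin) :=
    (LinearMap.injective_iff_surjective).mpr (LinearMap.range_eq_top.mp hsurj)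
  have : Function.Injective ((Aᵀ * A).mulVec) := hinj
  exact (Matrix.isUnit_iff_isUnit_det _).mp (Matrix.mulVec_injective_iff_isUnit.mp this)

lemma aux_trace {p n m : ℕ} (A : Matrix (Fin p) (Fin n) ℝ) (hA : A.rank = n)
    (W : Matrix (Fin m) (Fin n) ℝ) :
    ∑ i, ∑ j, ((W * ((Aᵀ * A)⁻¹ * Aᵀ)) i j) ^ 2
      = Matrix.trace (Wᵀ * W * (Aᵀ * A)⁻¹) := by
  set B := (Aᵀ * A)⁻¹ with hB
  set M := W * (B * Aᵀ) with hM
  have hU := aux_isUnit_det A hA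
  have hBsymm : Bᵀ = B := by
    rw [hB, Matrix.transpose_nonsing_inv, Matrix.transpose_mul, Matrix.transpose_transpose]
  have h1 : ∑ i, ∑ j, (M i j) ^ 2 = Matrix.trace (Mᵀ * M) := by
    rw [Matrix.trace]
    simp only [Matrix.diag, Matrix.mul_apply, Matrix.transpose_apply, sq]
    rw [Finset.sum_comm]
  have h2 : Mᵀ * M = A * (B * (Wᵀ * (W * (B * Aᵀ)))) := by
    rw [hM, Matrix.transpose_mul, Matrix.transpose_mul, Matrix.transpose_transpose, hBsymm]
    simp only [Matrix.mul_assoc]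
  rw [h1, h2, Matrix.trace_mul_comm]
  have h3 : B * (Wᵀ * (W * (B * Aᵀ))) * A = B * (Wᵀ * (W * (B * (Aᵀ * A)))) := by
    simp only [Matrix.mul_assoc]
  rw [h3, hB, Matrix.nonsing_inv_mul _ hU, Matrix.mul_one, Matrix.trace_mul_comm]

/-- **Total error of the (ε,δ)-matrix mechanism.**
If `A` has full column rank `n`, `A⁺ = (AᵀA)⁻¹Aᵀ`, `W` is any `m×n` matrix, and `g` is a
random vector with independent centered Gaussian coordinates of standard deviation `σ ≥ 0`,
then `E[‖W A⁺ g‖₂²] = σ² · trace(WᵀW (AᵀA)⁻¹)`.  In particular, for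
`σ = ‖A‖₂·√(2 ln(2/δ))/ε` (where `‖A‖₂` is the max Euclidean column norm of `A`),
the expectation equals `(2 ln(2/δ)/ε²) · ‖A‖₂² · trace(WᵀW (AᵀA)⁻¹)`. -/
theorem matrix_mechanism_expected_squared_error
    {Ω : Type*} [MeasurableSpace Ω] (μ : Measure Ω) [IsProbabilityMeasure μ]
    (p n m : ℕ) (A : Matrix (Fin p) (Fin n) ℝ) (hA : A.rank = n)
    (W : Matrix (Fin m) (Fin n) ℝ) (σ : ℝ) (hσ : 0 ≤ σ)
    (g : Ω → Fin p → ℝ)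
    (hmeas : ∀ i, Measurable fun ω => g ω i)
    (hindep : iIndepFun (fun i ω => g ω i) μ)
    (hgauss : ∀ i, μ.map (fun ω => g ω i) = gaussianReal 0 ⟨σ ^ 2, sq_nonneg σ⟩)
    (ε δ : ℝ) (hε : 0 < ε) (hδ0 : 0 < δ) (hδ1 : δ < 1) :
    (∫ ω, ∑ i, ((W * ((Aᵀ * A)⁻¹ * Aᵀ)).mulVec (g ω) i) ^ 2 ∂μ)
        = σ ^ 2 * Matrix.trace (Wᵀ * W * (Aᵀ * A)⁻¹) ∧
    (σ = (⨆ j, Real.sqrt (∑ i, (A i j) ^ 2)) * Real.sqrt (2 * Real.log (2 / δ)) / ε →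
      (∫ ω, ∑ i, ((W * ((Aᵀ * A)⁻¹ * Aᵀ)).mulVec (g ω) i) ^ 2 ∂μ)
          = (2 * Real.log (2 / δ) / ε ^ 2) * (⨆ j, Real.sqrt (∑ i, (A i j) ^ 2)) ^ 2
              * Matrix.trace (Wᵀ * W * (Aᵀ * A)⁻¹)) := by
  set v : NNReal := ⟨σ ^ 2, sq_nonneg σ⟩ with hv
  set M := W * ((Aᵀ * A)⁻¹ * Aᵀ) with hMdef
  -- transfer moments to Ω
  have hgi : ∀ j, Integrable (fun ω => g ω j) μ := by
    intro j
    have h := aux_integrable_id_gaussianReal v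
    rw [← hgauss j] at h
    exact (integrable_map_measure aestronglyMeasurable_id (hmeas j).aemeasurable).mp h
  have hgsqi : ∀ j, Integrable (fun ω => g ω j * g ω j) μ := by
    intro j
    have h := aux_integrable_sq_gaussianReal v
    rw [← hgauss j] at h
    exact (integrable_map_measure
      (measurable_id.mul measurable_id).aestronglyMeasurable (hmeas j).aemeasurable).mp h
  have hmean : ∀ j, ∫ ω, g ω j ∂μ = 0 := by
    intro j
    have h := integral_map (μ := μ) (hmeas j).aemeasurable
      (f := fun x : ℝ => x) aestronglyMeasurable_id
    rw [hgauss j] at h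
    rw [← h, aux_mean_gaussianReal v]
  have hsqmean : ∀ j, ∫ ω, g ω j * g ω j ∂μ = σ ^ 2 := by
    intro j
    have h := integral_map (μ := μ) (hmeas j).aemeasurable
      (f := fun x : ℝ => x * x) (measurable_id.mul measurable_id).aestronglyMeasurable
    rw [hgauss j] at h
    rw [← h, aux_variance_gaussianReal v]
    rfl
  have hcov : ∀ j k, Integrable (fun ω => g ω j * g ω k) μ := by
    intro j k
    by_cases hjk : j = k
    · subst hjk; exact hgsqi j
    · exact (hindep.indepFun hjk).integrable_mul (hgi j) (hgi k)
  have hcovval : ∀ j k, ∫ ω, g ω j * g ω k ∂μ = if j = k then σ ^ 2 else 0 := by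
    intro j k
    by_cases hjk : j = k
    · subst hjk; rw [if_pos rfl]; exact hsqmean j
    · rw [if_neg hjk]
      have h := (hindep.indepFun hjk).integral_mul_eq_mul_integral
        (hmeas j).aestronglyMeasurable (hmeas k).aestronglyMeasurable
      rw [show (∫ ω, g ω j * g ω k ∂μ)
          = integral μ ((fun ω => g ω j) * fun ω => g ω k) from rfl, h, hmean j, zero_mul]
  -- main computation
  have key : ∀ ω, ∑ i, (M.mulVec (g ω) i) ^ 2
      = ∑ i, ∑ j, ∑ k, (M i j * M i k) * (g ω j * g ω k) := by
    intro ω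
    refine Finset.sum_congr rfl fun i _ => ?_
    rw [Matrix.mulVec, dotProduct, sq, Finset.sum_mul_sum]
    exact Finset.sum_congr rfl fun j _ => Finset.sum_congr rfl fun k _ => by ring
  have hint2 : ∀ (i : Fin m) (j : Fin p),
      Integrable (fun ω => ∑ k, (M i j * M i k) * (g ω j * g ω k)) μ :=
    fun i j => integrable_finset_sum _ (fun k _ => (hcov j k).const_mul _)
  have hint1 : ∀ i : Fin m,
      Integrable (fun ω => ∑ j, ∑ k, (M i j * M i k) * (g ω j * g ω k)) μ :=
    fun i => integrable_finset_sum _ (fun j _ => hint2 i j)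
  have main : (∫ ω, ∑ i, (M.mulVec (g ω) i) ^ 2 ∂μ)
      = σ ^ 2 * Matrix.trace (Wᵀ * W * (Aᵀ * A)⁻¹) := by
    calc (∫ ω, ∑ i, (M.mulVec (g ω) i) ^ 2 ∂μ)
        = ∫ ω, ∑ i, ∑ j, ∑ k, (M i j * M i k) * (g ω j * g ω k) ∂μ := by
          exact integral_congr_ae (Filter.Eventually.of_forall fun ω => key ω)
      _ = ∑ i, ∑ j, ∑ k, (M i j * M i k) * ∫ ω, g ω j * g ω k ∂μ := by
          rw [integral_finset_sum _ (fun i _ => hint1 i)]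
          refine Finset.sum_congr rfl fun i _ => ?_
          rw [integral_finset_sum _ (fun j _ => hint2 i j)]
          refine Finset.sum_congr rfl fun j _ => ?_
          rw [integral_finset_sum _ (fun k _ => (hcov j k).const_mul _)]
          exact Finset.sum_congr rfl fun k _ => integral_const_mul _ _
      _ = ∑ i, ∑ j, (M i j) ^ 2 * σ ^ 2 := by
          refine Finset.sum_congr rfl fun i _ => Finset.sum_congr rfl fun j _ => ?_
          rw [Finset.sum_eq_single j]
          · rw [hcovval j j, if_pos rfl]; ring
          · intro k _ hkj
            rw [hcovval j k, if_neg (Ne.symm hkj), mul_zero]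
          · intro h; exact absurd (Finset.mem_univ j) h
      _ = σ ^ 2 * Matrix.trace (Wᵀ * W * (Aᵀ * A)⁻¹) := by
          rw [← aux_trace A hA W, Finset.mul_sum]
          refine Finset.sum_congr rfl fun i _ => ?_
          rw [Finset.mul_sum]
          exact Finset.sum_congr rfl fun j _ => by rw [hMdef]; ring
  refine ⟨main, fun hσeq => ?_⟩
  rw [main, hσeq]
  have hL : (0:ℝ) ≤ 2 * Real.log (2 / δ) := by
    have : (1:ℝ) ≤ 2 / δ := by
      rw [le_div_iff₀ hδ0]; linarith
    have := Real.log_nonneg this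
    linarith
  rw [div_pow, mul_pow, Real.sq_sqrt hL]
  ring
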